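/- Let G be an infinite group generated by a finite symmetric set S, with balls B_r = (S ∪ {1})^r, and suppose there exist constants c > 0 and d > 2 such that |B_r| ≥ c·r^d for all r ≥ 1. Then there exists a constant c' > 0 such that for every nonempty finite subset A ⊆ G, |∂A| ≥ c' · |A|^{(d-1)/d}, where ∂A = { (a,s) ∈ A × S : a·s ∉ A }. (That is, super-d-dimensional volume growth implies a d-dimensional isoperimetric inequality.) -/

import Mathlib

open Pointwise

open scoped Classical in
private lemma finite_pow_aux {G : Type*} [Group G] {T : Set G} (hT : T.Finite) :
    ∀ n : ℕ, (T ^ n).Finite := by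
  intro n
  induction n with
  | zero => simp [Set.finite_singleton]
  | succ n ih => rw [pow_succ]; exact ih.mul hT

open scoped Classical in
/-- Crossing lemma: if `g` is a product of `r` elements of `S ∪ {1}`, then the number of
`a ∈ A` with `a * g ∉ A` is at most `r` times the edge boundary of `A`. -/
private lemma crossing_aux {G : Type*} [Group G] (A : Finset G) {S : Set G} (hS : S.Finite) :
    ∀ (r : ℕ) (g : G), g ∈ (S ∪ {1} : Set G) ^ r →
      (A.filter fun a => a * g ∉ A).card ≤
        r * ((A ×ˢ hS.toFinset).filter fun p => p.1 * p.2 ∉ A).card := by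
  intro r
  induction r with
  | zero =>
    intro g hg
    rw [pow_zero, Set.mem_one] at hg
    subst hg
    rw [Nat.zero_mul, Nat.le_zero, Finset.card_eq_zero]
    exact Finset.filter_eq_empty_iff.2 (by intro a ha; simp [ha])
  | succ n ih =>
    intro g hg
    rw [pow_succ] at hg
    obtain ⟨h, hh, t, ht, rfl⟩ := Set.mem_mul.1 hg
    by_cases ht1 : t = 1
    · subst ht1
      calc (A.filter fun a => a * (h * 1) ∉ A).card
          = (A.filter fun a => a * h ∉ A).card := by simp
        _ ≤ n * ((A ×ˢ hS.toFinset).filter fun p => p.1 * p.2 ∉ A).card := ih h hh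
        _ ≤ (n + 1) * _ := by
            exact Nat.mul_le_mul_right _ (Nat.le_succ n)
    · have htS : t ∈ S := ht.resolve_right (by simpa using ht1)
      have hsub : (A.filter fun a => a * (h * t) ∉ A) ⊆
          (A.filter fun a => a * h ∉ A) ∪
          (A.filter fun a => a * h ∈ A ∧ a * h * t ∉ A) := by
        intro a ha
        simp only [Finset.mem_filter, Finset.mem_union] at ha ⊢
        by_cases hah : a * h ∈ A
        · exact Or.inr ⟨ha.1, hah, by rw [mul_assoc]; exact ha.2⟩
        · exact Or.inl ⟨ha.1, hah⟩
      have h2 : (A.filter fun a => a * h ∈ A ∧ a * h * t ∉ A).card ≤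
          ((A ×ˢ hS.toFinset).filter fun p => p.1 * p.2 ∉ A).card := by
        apply Finset.card_le_card_of_injOn (fun a => (a * h, t))
        · intro a ha
          simp only [Finset.mem_coe, Finset.mem_filter] at ha
          simp only [Finset.mem_coe, Finset.mem_filter, Finset.mem_product, Set.Finite.mem_toFinset]
          exact ⟨⟨ha.2.1, htS⟩, ha.2.2⟩
        · intro a _ b _ hab
          have := congrArg Prod.fst hab
          simpa using this
      calc (A.filter fun a => a * (h * t) ∉ A).card
          ≤ ((A.filter fun a => a * h ∉ A) ∪
             (A.filter fun a => a * h ∈ A ∧ a * h * t ∉ A)).card :=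
            Finset.card_le_card hsub
        _ ≤ (A.filter fun a => a * h ∉ A).card +
            (A.filter fun a => a * h ∈ A ∧ a * h * t ∉ A).card := Finset.card_union_le _ _
        _ ≤ n * ((A ×ˢ hS.toFinset).filter fun p => p.1 * p.2 ∉ A).card +
            ((A ×ˢ hS.toFinset).filter fun p => p.1 * p.2 ∉ A).card :=
            Nat.add_le_add (ih h hh) h2
        _ = (n + 1) * ((A ×ˢ hS.toFinset).filter fun p => p.1 * p.2 ∉ A).card := by ring

open scoped Classical in
/-- Averaging lemma: if `B` is at least twice as large as `A`, some translate `A * g`,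
`g ∈ B`, moves at least half of `A` out of `A`. -/
private lemma avg_aux {G : Type*} [Group G] (A B : Finset G) (hA : A.Nonempty)
    (hB : 2 * A.card ≤ B.card) :
    ∃ g ∈ B, A.card ≤ 2 * (A.filter fun a => a * g ∉ A).card := by
  have hBne : B.Nonempty := by
    rw [← Finset.card_pos]
    have : 0 < A.card := Finset.card_pos.2 hA
    omega
  obtain ⟨g, hgB, hgmin⟩ := Finset.exists_min_image B (fun g => (A.filter fun a => a * g ∈ A).card) hBne
  refine ⟨g, hgB, ?_⟩
  set N := fun g => (A.filter fun a => a * g ∈ A).card with hN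
  -- total count
  have hsum : ∑ g' ∈ B, N g' ≤ A.card * A.card := by
    have : ∀ g', N g' = ∑ a ∈ A, if a * g' ∈ A then 1 else 0 := fun g' =>
      Finset.card_filter _ _
    calc ∑ g' ∈ B, N g' = ∑ g' ∈ B, ∑ a ∈ A, if a * g' ∈ A then 1 else 0 := by
          simp only [this]
      _ = ∑ a ∈ A, ∑ g' ∈ B, if a * g' ∈ A then 1 else 0 := Finset.sum_comm
      _ = ∑ a ∈ A, (B.filter fun g' => a * g' ∈ A).card :=
          Finset.sum_congr rfl fun a _ => (Finset.card_filter _ _).symm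
      _ ≤ ∑ a ∈ A, A.card := by
          apply Finset.sum_le_sum
          intro a _
          apply Finset.card_le_card_of_injOn (fun g' => a * g')
          · intro g' hg'; exact (Finset.mem_filter.1 hg').2
          · intro x _ y _ hxy; exact mul_left_cancel hxy
      _ = A.card * A.card := by rw [Finset.sum_const, smul_eq_mul]
  have hmin : B.card * N g ≤ A.card * A.card := by
    calc B.card * N g = B.card • N g := by rw [smul_eq_mul]
      _ ≤ ∑ g' ∈ B, N g' := Finset.card_nsmul_le_sum B _ _ (fun x hx => hgmin x hx)
      _ ≤ A.card * A.card := hsum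
  have h2N : 2 * N g ≤ A.card := by
    have hAc : 0 < A.card := Finset.card_pos.2 hA
    have : A.card * (2 * N g) ≤ A.card * A.card := by
      calc A.card * (2 * N g) = (2 * A.card) * N g := by ring
        _ ≤ B.card * N g := Nat.mul_le_mul_right _ hB
        _ ≤ A.card * A.card := hmin
    exact Nat.le_of_mul_le_mul_left this hAc
  have hsplit : N g + (A.filter fun a => a * g ∉ A).card = A.card :=
    Finset.card_filter_add_card_filter_not _
  omega

/-- Super-`d`-dimensional volume growth implies a `d`-dimensional isoperimetric
inequality: if `G` is an infinite group generated by a finite symmetric set `S`, with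
balls `B r = (S ∪ {1}) ^ r` satisfying `|B r| ≥ c · r ^ d` for all `r ≥ 1` (where `c > 0`
and `d > 2`), then there is `c' > 0` so that every nonempty finite `A ⊆ G` satisfies
`|∂A| ≥ c' · |A| ^ ((d-1)/d)`, where `∂A = {(a,s) ∈ A × S : a * s ∉ A}`. -/
theorem isoperimetry_of_growth {G : Type*} [Group G] [Infinite G] (S : Set G)
    (hfin : S.Finite) (hsym : S⁻¹ = S) (hgen : Subgroup.closure S = ⊤)
    (c d : ℝ) (hc : 0 < c) (hd : 2 < d)
    (hgrowth : ∀ r : ℕ, 1 ≤ r → c * (r : ℝ) ^ d ≤ ((S ∪ {1} : Set G) ^ r).ncard) :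
    ∃ c' : ℝ, 0 < c' ∧ ∀ A : Set G, A.Finite → A.Nonempty →
      c' * (A.ncard : ℝ) ^ ((d - 1) / d) ≤
        ({p : G × G | p.1 ∈ A ∧ p.2 ∈ S ∧ p.1 * p.2 ∉ A}.ncard : ℝ) := by
  classical
  have hd0 : (0:ℝ) < d := by linarith
  set x₀ : ℝ := (2 / c) ^ (1 / d) with hx₀
  have hx₀pos : 0 < x₀ := Real.rpow_pos_of_pos (by positivity) _
  refine ⟨1 / (2 * (x₀ + 1)), by positivity, ?_⟩
  intro A hAfin hAne
  set A' : Finset G := hAfin.toFinset with hA'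
  have hA'ne : A'.Nonempty := by simpa [hA', Set.Finite.toFinset_nonempty] using hAne
  have hAcard : A.ncard = A'.card := Set.ncard_eq_toFinset_card A hAfin
  set nA : ℕ := A'.card with hnA
  have hnA1 : 1 ≤ nA := Finset.card_pos.2 hA'ne
  have hnAR : (1:ℝ) ≤ (nA:ℝ) := by exact_mod_cast hnA1
  have hnApos : (0:ℝ) < (nA:ℝ) := by exact_mod_cast hnA1
  set x : ℝ := (2 * nA / c) ^ (1 / d) with hx
  have hxpos : 0 < x := Real.rpow_pos_of_pos (by positivity) _
  set r : ℕ := ⌈x⌉₊ with hr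
  have hr1 : 1 ≤ r := Nat.one_le_iff_ne_zero.2 (by
    simp only [hr, ne_eq, Nat.ceil_eq_zero, not_le]
    exact hxpos)
  have hrx : x ≤ (r:ℝ) := Nat.le_ceil x
  have hrx1 : (r:ℝ) ≤ x + 1 := le_of_lt (Nat.ceil_lt_add_one hxpos.le)
  set T : Set G := S ∪ {1} with hT
  have hTfin : (T ^ r).Finite := finite_pow_aux (hfin.union (Set.finite_singleton 1)) r
  set B' : Finset G := hTfin.toFinset with hB'
  -- ball lower bound
  have hball : (2:ℝ) * nA ≤ B'.card := by
    have h1 : (2:ℝ) * nA = (2 * nA / c) * c := by field_simp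
    have h2 : (2 * nA / c) ≤ (r:ℝ) ^ d := by
      have : x ^ d ≤ (r:ℝ) ^ d :=
        Real.rpow_le_rpow hxpos.le hrx hd0.le
      rwa [hx, ← Real.rpow_mul (x := 2 * (nA:ℝ) / c) (div_nonneg (by linarith) hc.le),
        one_div, inv_mul_cancel₀ (ne_of_gt hd0), Real.rpow_one] at this
    calc (2:ℝ) * nA = c * (2 * nA / c) := by field_simp
      _ ≤ c * (r:ℝ) ^ d := by
          exact mul_le_mul_of_nonneg_left h2 hc.le
      _ ≤ ((T ^ r).ncard : ℝ) := hgrowth r hr1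
      _ = (B'.card : ℝ) := by rw [Set.ncard_eq_toFinset_card _ hTfin]
  have hballN : 2 * nA ≤ B'.card := by exact_mod_cast hball
  obtain ⟨g, hgB, hg2⟩ := avg_aux A' B' hA'ne hballN
  have hgT : g ∈ T ^ r := by rwa [hB', Set.Finite.mem_toFinset] at hgB
  -- boundary finset
  set bd : Finset (G × G) := (A' ×ˢ hfin.toFinset).filter fun p => p.1 * p.2 ∉ A' with hbd
  have hcross : (A'.filter fun a => a * g ∉ A').card ≤ r * bd.card :=
    crossing_aux A' hfin r g hgT
  have hkey : (nA : ℝ) ≤ 2 * r * bd.card := by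
    have : nA ≤ 2 * (r * bd.card) := le_trans hg2 (Nat.mul_le_mul_left 2 hcross)
    calc (nA:ℝ) ≤ ((2 * (r * bd.card) : ℕ) : ℝ) := by exact_mod_cast this
      _ = 2 * r * bd.card := by push_cast; ring
  -- identify boundary set with bd
  have hbdset : {p : G × G | p.1 ∈ A ∧ p.2 ∈ S ∧ p.1 * p.2 ∉ A} = ↑bd := by
    ext p
    simp only [hbd, Finset.coe_filter, Finset.mem_product, Set.mem_setOf_eq, hA',
      Set.Finite.mem_toFinset]
    tauto
  rw [hbdset, Set.ncard_coe_finset, hAcard]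
  -- final computation
  have hP : (0:ℝ) < (nA:ℝ) ^ (1/d) := Real.rpow_pos_of_pos (by positivity) _
  have hP1 : (1:ℝ) ≤ (nA:ℝ) ^ (1/d) := Real.one_le_rpow hnAR (by positivity)
  have hxeq : x = x₀ * (nA:ℝ) ^ (1/d) := by
    rw [hx, hx₀, ← Real.mul_rpow (div_nonneg (by norm_num) hc.le) (Nat.cast_nonneg nA)]
    congr 1
    ring
  have hrbound : (r:ℝ) ≤ (x₀ + 1) * (nA:ℝ) ^ (1/d) := by
    calc (r:ℝ) ≤ x + 1 := hrx1
      _ = x₀ * (nA:ℝ) ^ (1/d) + 1 := by rw [hxeq]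
      _ ≤ x₀ * (nA:ℝ) ^ (1/d) + (nA:ℝ) ^ (1/d) := by linarith
      _ = (x₀ + 1) * (nA:ℝ) ^ (1/d) := by ring
  have hbdnn : (0:ℝ) ≤ (bd.card : ℝ) := Nat.cast_nonneg _
  have hkey2 : (nA:ℝ) ≤ 2 * (x₀ + 1) * (nA:ℝ) ^ (1/d) * bd.card := by
    calc (nA:ℝ) ≤ 2 * r * bd.card := hkey
      _ ≤ 2 * ((x₀ + 1) * (nA:ℝ) ^ (1/d)) * bd.card := by
          apply mul_le_mul_of_nonneg_right _ hbdnn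
          have := hrbound
          nlinarith
      _ = 2 * (x₀ + 1) * (nA:ℝ) ^ (1/d) * bd.card := by ring
  have hsplitpow : (nA:ℝ) ^ ((d-1)/d) * (nA:ℝ) ^ (1/d) = (nA:ℝ) := by
    rw [← Real.rpow_add hnApos]
    have hdne : d ≠ 0 := ne_of_gt hd0
    have : (d-1)/d + 1/d = 1 := by field_simp; ring
    rw [this, Real.rpow_one]
  have hmain : (nA:ℝ) ^ ((d-1)/d) ≤ 2 * (x₀ + 1) * bd.card := by
    have h'' : (nA:ℝ) ^ ((d-1)/d) * (nA:ℝ) ^ (1/d) ≤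
        (2 * (x₀ + 1) * bd.card) * (nA:ℝ) ^ (1/d) := by
      rw [hsplitpow]
      calc (nA:ℝ) ≤ 2 * (x₀ + 1) * (nA:ℝ) ^ (1/d) * bd.card := hkey2
        _ = (2 * (x₀ + 1) * bd.card) * (nA:ℝ) ^ (1/d) := by ring
    exact le_of_mul_le_mul_right h'' hP
  rw [div_mul_eq_mul_div, div_le_iff₀ (by positivity), one_mul]
  linarith [hmain]
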